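/- Let (R,m) be a Noetherian local ring with sop x_1,...,x_d such that (x_1,...,x_i) : x_{i+1} = (x_1,...,x_i)^unm and (x_1,...,x_i)^unm = (x_1,...,x_i)^* for all i < d, where ^unm is the unmixed hull and ^* the tight closure. Then for i < d one has the inclusion (x_1,...,x_i)^* ⊆ (x_1,...,x_{i+1})^lim, and consequently the natural maps (x_1,...,x_i)^*/(x_1,...,x_i)^lim → (x_1,...,x_{i+1})^*/(x_1,...,x_{i+1})^lim, r ↦ r, and r ↦ r·x_{i+1}, are zero maps. -/
import Mathlib


open IsLocalRing

def offMinimalPrimes (R : Type*) [CommRing R] : Set R :=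
  {c : R | ∀ P ∈ minimalPrimes R, c ∉ P}

def frobeniusPower {R : Type*} [CommRing R] (I : Ideal R) (q : ℕ) : Ideal R :=
  Ideal.span ((fun r => r ^ q) '' (I : Set R))

def tightClosure {R : Type*} [CommRing R] (p : ℕ) (I : Ideal R) : Set R :=
  {z : R | ∃ c ∈ offMinimalPrimes R, ∃ e₀ : ℕ, ∀ e ≥ e₀,
    c * z ^ p ^ e ∈ frobeniusPower I (p ^ e)}

/-- The ideal `(x_1,…,x_i)` generated by the first `i` entries of `x`. -/
def firstIdeal {R : Type*} [CommRing R] {d : ℕ} (x : Fin d → R) (i : ℕ) : Ideal R :=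
  Ideal.span (x '' {j : Fin d | (j : ℕ) < i})

/-- The limit closure `(x_1,…,x_i)^lim = ⋃_s ((x_1^s,…,x_i^s) : (x_1⋯x_i)^{s-1})`. -/
def firstLimitClosure {R : Type*} [CommRing R] {d : ℕ} (x : Fin d → R) (i : ℕ) : Set R :=
  {z : R | ∃ s ≥ 1,
    (∏ j ∈ Finset.univ.filter (fun j : Fin d => (j : ℕ) < i), x j) ^ (s - 1) * z ∈
      Ideal.span ((fun j => x j ^ s) '' {j : Fin d | (j : ℕ) < i})}

/-- if `x_1,…,x_d` is an sop of a Noetherian local ring of characteristic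
`p > 0` with `(x_1,…,x_i) : x_{i+1} = (x_1,…,x_i)^unm` and `(x_1,…,x_i)^unm = (x_1,…,x_i)^*`
for all `i < d`, then `(x_1,…,x_i)^* ⊆ (x_1,…,x_{i+1})^lim`; consequently both natural maps
`(x_1,…,x_i)^*/(x_1,…,x_i)^lim → (x_1,…,x_{i+1})^*/(x_1,…,x_{i+1})^lim`, `r ↦ r` and
`r ↦ r·x_{i+1}`, are zero. -/
theorem stmt10 {R : Type*} [CommRing R] [IsLocalRing R] [IsNoetherianRing R]
    (p : ℕ) [Fact p.Prime] [CharP R p]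
    (d : ℕ) (hd : ringKrullDim R = d) (x : Fin d → R)
    (hsop : (Ideal.span (Set.range x)).radical = maximalIdeal R)
    (U : ℕ → Ideal R)
    (hcolon : ∀ (i : ℕ) (hi : i < d),
      (firstIdeal x i).colon (Ideal.span {x ⟨i, hi⟩}) = U i)
    (hU : ∀ i : ℕ, i < d → (U i : Set R) = tightClosure p (firstIdeal x i)) :
    ∀ (i : ℕ) (hi : i < d), ∀ r ∈ tightClosure p (firstIdeal x i),
      r ∈ firstLimitClosure x (i + 1) ∧ r * x ⟨i, hi⟩ ∈ firstLimitClosure x (i + 1) := by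
  intro i hi r hr
  have hrU : r ∈ U i := by
    rw [← SetLike.mem_coe, hU i hi]; exact hr
  have hmul : r * x ⟨i, hi⟩ ∈ firstIdeal x i := by
    rw [← hcolon i hi] at hrU
    exact Ideal.mem_colon_span_singleton.mp hrU
  have hsub : firstIdeal x i ≤ firstIdeal x (i + 1) := by
    apply Ideal.span_mono
    apply Set.image_mono
    intro j hj
    exact Nat.lt_succ_of_lt hj
  have hmem : (⟨i, hi⟩ : Fin d) ∈ Finset.univ.filter (fun j : Fin d => (j : ℕ) < i + 1) := by
    simp
  have herase : (Finset.univ.filter (fun j : Fin d => (j : ℕ) < i + 1)).erase ⟨i, hi⟩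
      = Finset.univ.filter (fun j : Fin d => (j : ℕ) < i) := by
    ext j
    simp only [Finset.mem_erase, Finset.mem_filter, Finset.mem_univ, true_and]
    constructor
    · rintro ⟨hne, hlt⟩
      rcases Nat.lt_succ_iff_lt_or_eq.mp hlt with h | h
      · exact h
      · exact absurd (Fin.ext h) hne
    · intro h
      exact ⟨fun he => by rw [he] at h; exact absurd h (lt_irrefl i), Nat.lt_succ_of_lt h⟩
  have hprod : (∏ j ∈ Finset.univ.filter (fun j : Fin d => (j : ℕ) < i + 1), x j)
      = x ⟨i, hi⟩ * ∏ j ∈ Finset.univ.filter (fun j : Fin d => (j : ℕ) < i), x j := by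
    rw [← herase, Finset.mul_prod_erase _ _ hmem]
  set P : R := ∏ j ∈ Finset.univ.filter (fun j : Fin d => (j : ℕ) < i), x j with hP
  have aux : ∀ a ∈ firstIdeal x i,
      P * a ∈ Ideal.span ((fun j => x j ^ 2) '' {j : Fin d | (j : ℕ) < i + 1}) := by
    intro a ha
    induction ha using Submodule.span_induction with
    | mem a hma =>
        obtain ⟨j, hj, rfl⟩ := hma
        have hjmem : j ∈ Finset.univ.filter (fun k : Fin d => (k : ℕ) < i) := by
          simpa using hj
        have : P = x j * ∏ k ∈ (Finset.univ.filter (fun k : Fin d => (k : ℕ) < i)).erase j, x k := by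
          rw [hP, ← Finset.mul_prod_erase _ _ hjmem]
        rw [this]
        have hgen : x j ^ 2 ∈ Ideal.span ((fun j => x j ^ 2) '' {j : Fin d | (j : ℕ) < i + 1}) :=
          Ideal.subset_span ⟨j, Nat.lt_succ_of_lt hj, rfl⟩
        have : x j * (∏ k ∈ (Finset.univ.filter (fun k : Fin d => (k : ℕ) < i)).erase j, x k) * x j
            = x j ^ 2 * ∏ k ∈ (Finset.univ.filter (fun k : Fin d => (k : ℕ) < i)).erase j, x k := by
          ring
        rw [this]
        exact Ideal.mul_mem_right _ _ hgen
    | zero => simpa using Ideal.zero_mem _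
    | add a b _ _ ha hb => rw [mul_add]; exact Ideal.add_mem _ ha hb
    | smul c a _ ha =>
        have h2 : P * (c • a) = c * (P * a) := by
          simp only [smul_eq_mul]; ring
        rw [h2]
        exact Ideal.mul_mem_left _ _ ha
  constructor
  · refine ⟨2, by norm_num, ?_⟩
    rw [hprod]
    have : (x ⟨i, hi⟩ * P) ^ (2 - 1) * r = P * (r * x ⟨i, hi⟩) := by ring
    rw [this]
    exact aux _ hmul
  · refine ⟨1, le_refl 1, ?_⟩
    simp only [Nat.sub_self, pow_zero, one_mul, pow_one]
    have : ((fun j => x j ^ 1) '' {j : Fin d | (j : ℕ) < i + 1}) = x '' {j : Fin d | (j : ℕ) < i + 1} := by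
      simp
    exact hsub hmul
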